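/- Let T1, T2 be two trees on the same label set 𝒳. Then MASTRL({T1, T2}) = d_LR(T1, T2). Moreover, every leaf-disagreement (𝒳1', 𝒳2') for {T1, T2} of minimum size satisfies 𝒳1' ∩ 𝒳2' = ∅ and is obtained by partitioning into two parts a label-disagreement 𝒳' = 𝒳1' ∪ 𝒳2' for {T1, T2} of size d_LR(T1, T2). -/

import Mathlib

/-!
Common framework: rooted binary trees with leaves bijectively labeled by a
finite label set, leaf removal, restriction, the leaf-removal distance `d_LR`,
compatibility, leaf-disagreements, triplets, LPR moves, etc.
-/

universe u

/-- A rooted binary tree whose leaves carry labels from `α`. -/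
inductive LTree (α : Type u) : Type u where
  | leaf : α → LTree α
  | node : LTree α → LTree α → LTree α

namespace LTree

variable {α : Type u} [DecidableEq α]

/-- The set of leaf labels of a tree. -/
def labels : LTree α → Finset α
  | leaf a => {a}
  | node l r => labels l ∪ labels r

/-- A tree is `Good` when its leaves carry pairwise distinct labels
(i.e. the leaves are bijectively labeled). -/
def Good : LTree α → Prop
  | leaf _ => True
  | node l r => Good l ∧ Good r ∧ Disjoint (labels l) (labels r)

/-- `T` is a (rooted binary, uniquely leaf-labeled) tree on label set `𝒳`. -/
def IsTreeOn (T : LTree α) (𝒳 : Finset α) : Prop :=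
  Good T ∧ labels T = 𝒳

/-- Equality of rooted trees: children of a node are unordered. -/
inductive Iso : LTree α → LTree α → Prop
  | leaf (a : α) : Iso (leaf a) (leaf a)
  | node {l₁ r₁ l₂ r₂ : LTree α} :
      Iso l₁ l₂ → Iso r₁ r₂ → Iso (node l₁ r₁) (node l₂ r₂)
  | swap {l₁ r₁ l₂ r₂ : LTree α} :
      Iso l₁ r₂ → Iso r₁ l₂ → Iso (node l₁ r₁) (node l₂ r₂)

/-- Equality of possibly empty trees (`none` is the empty tree). -/
def OptIso : Option (LTree α) → Option (LTree α) → Prop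
  | none, none => True
  | some t₁, some t₂ => Iso t₁ t₂
  | _, _ => False

/-- Restriction `T|_S`: keep exactly the leaves with labels in `S`, suppressing
the resulting degree-two vertices and degree-one roots; the result is `none`
when no leaf survives. -/
def restrict : LTree α → Finset α → Option (LTree α)
  | leaf a, S => if a ∈ S then some (leaf a) else none
  | node l r, S =>
    match restrict l S, restrict r S with
    | some l', some r' => some (node l' r')
    | some l', none => some l'
    | none, some r' => some r'
    | none, none => none

/-- `T − X`: remove from `T` every leaf whose label lies in `X`. -/
def remove (T : LTree α) (X : Finset α) : Option (LTree α) :=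
  restrict T (labels T \ X)

/-- The leaf-removal distance `d_LR(T₁,T₂)`: the minimum number of labels
whose removal makes the two trees equal. -/
noncomputable def dLR (T₁ T₂ : LTree α) : ℕ :=
  sInf {n | ∃ X : Finset α, X ⊆ labels T₁ ∪ labels T₂ ∧ X.card = n ∧
    OptIso (remove T₁ X) (remove T₂ X)}

def labelsO : Option (LTree α) → Finset α
  | none => ∅
  | some t => labels t

def GoodO : Option (LTree α) → Prop
  | none => True
  | some t => Good t

def restrictO : Option (LTree α) → Finset α → Option (LTree α)
  | none, _ => none
  | some t, S => restrict t S

/-- A family of (possibly empty) trees is compatible if there is a single tree,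
on the union of their label sets, which displays all of them. -/
def CompatibleFamO {ι : Type*} (f : ι → Option (LTree α)) : Prop :=
  ∃ TO : Option (LTree α), GoodO TO ∧
    (↑(labelsO TO) : Set α) = (⋃ i, ↑(labelsO (f i))) ∧
    ∀ i, OptIso (restrictO TO (labelsO (f i))) (f i)

/-- A family of trees is compatible if a single tree displays all of them. -/
def CompatibleFam {ι : Type*} (𝒯 : ι → LTree α) : Prop :=
  CompatibleFamO fun i => some (𝒯 i)

/-- `X` is a leaf-disagreement for the family `𝒯`: removing `X i` from `𝒯 i`
yields a compatible family. -/
def IsLeafDisagreement {ι : Type*} (𝒯 : ι → LTree α) (X : ι → Finset α) : Prop :=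
  CompatibleFamO fun i => remove (𝒯 i) (X i)

/-- `X'` is a label-disagreement for the family `𝒯`. -/
def IsLabelDisagreement {ι : Type*} (𝒯 : ι → LTree α) (X' : Finset α) : Prop :=
  CompatibleFamO fun i => remove (𝒯 i) X'

/-- `MASTRL 𝒯`: the minimum size of a leaf-disagreement for `𝒯`. -/
noncomputable def MASTRL {t : ℕ} (𝒯 : Fin t → LTree α) : ℕ :=
  sInf {v | ∃ X : Fin t → Finset α, (∀ i, X i ⊆ labels (𝒯 i)) ∧
    (∑ i, (X i).card) = v ∧ IsLeafDisagreement 𝒯 X}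

/-- The triplet `ab|c` (as a tree). -/
def tripletTree (a b c : α) : LTree α := node (node (leaf a) (leaf b)) (leaf c)

/-- A rooted triplet: a tree with exactly three (distinctly labeled) leaves. -/
def IsTriplet (R : LTree α) : Prop := Good R ∧ (labels R).card = 3

/-- `ab|c` is a triplet of `T`, i.e. `T|_{a,b,c} = ab|c`. -/
def IsTripletOf (T : LTree α) (a b c : α) : Prop :=
  OptIso (restrict T {a, b, c}) (some (tripletTree a b c))

/-- `tr(T)`: the triplet decomposition of `T`. -/
def trSet (T : LTree α) : Set (LTree α) :=
  {R | ∃ a b c : α, R = tripletTree a b c ∧ IsTripletOf T a b c}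

/-- A set of trees is compatible: some tree on the union of the label sets
displays every member. -/
def CompatibleSet (S : Set (LTree α)) : Prop :=
  ∃ TO : Option (LTree α), GoodO TO ∧
    (↑(labelsO TO) : Set α) = (⋃ R ∈ S, ↑(labels R)) ∧
    ∀ R ∈ S, OptIso (restrictO TO (labels R)) (some R)

/-- `MINRTI ℛ`: the minimum number of triplets to delete from `ℛ` so that the
remaining triplets are compatible. -/
noncomputable def MINRTI {t : ℕ} (R : Fin t → LTree α) : ℕ :=
  sInf {m | ∃ s : Finset (Fin t), s.card = m ∧
    CompatibleFam (fun i : {i : Fin t // i ∉ s} => R i.1)}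

/-- Graft the leaf `x` at the position (edge) addressed by `p` in `T`.
The empty address grafts `x` above the root of `T` (the `⊥` case); the address
of an internal/leaf vertex `v` grafts `x` on the edge between `v` and its
parent.  `none` when the address is invalid. -/
def graftAt (x : α) : LTree α → List Bool → Option (LTree α)
  | T, [] => some (node (leaf x) T)
  | leaf _, _ :: _ => none
  | node l r, b :: p =>
    if b then (graftAt x l p).map (fun l' => node l' r)
    else (graftAt x r p).map (fun r' => node l r')

/-- `T'` is obtained from `T` by a single LPR (leaf prune-and-regraft) move on
the leaf `x`: prune `x` from `T` and regraft it, either on an edge of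
`T − {x}` or above its root. -/
def LPRStep (x : α) (T T' : LTree α) : Prop :=
  (remove T {x} = none ∧ T' = leaf x) ∨
  ∃ T₀ p, remove T {x} = some T₀ ∧ graftAt x T₀ p = some T'

/-- `TurnsInto L T T'`: the LPR sequence with (ordered) leaf list `L` turns
`T` into `T'`. -/
inductive TurnsInto : List α → LTree α → LTree α → Prop
  | nil {T T' : LTree α} : Iso T T' → TurnsInto [] T T'
  | cons {x : α} {xs : List α} {T T'' T' : LTree α} :
      LPRStep x T T'' → TurnsInto xs T'' T' → TurnsInto (x :: xs) T T'

/-- `confset(T₁,T₂)`: the collection of 3-label sets `{a,b,c}` such that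
`T₁` contains a triplet on `{a,b,c}` conflicting with a triplet of `T₂`. -/
def confset (T₁ T₂ : LTree α) : Set (Finset α) :=
  {s | ∃ a b c : α, s = {a, b, c} ∧ IsTripletOf T₁ a b c ∧
    (IsTripletOf T₂ a c b ∨ IsTripletOf T₂ b c a)}

/-- `X` is a minimal disagreement between `T₁` and `T₂`. -/
def MinimalDisagreement (T₁ T₂ : LTree α) (X : Finset α) : Prop :=
  X ⊆ labels T₁ ∪ labels T₂ ∧
  OptIso (remove T₁ X) (remove T₂ X) ∧
  ∀ X' ⊂ X, ¬ OptIso (remove T₁ X') (remove T₂ X')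

/-- `u` is (the rooted subtree hanging at) a node of `T`. -/
inductive IsSubtree : LTree α → LTree α → Prop
  | refl (T : LTree α) : IsSubtree T T
  | left {u l r : LTree α} : IsSubtree u l → IsSubtree u (node l r)
  | right {u l r : LTree α} : IsSubtree u r → IsSubtree u (node l r)

/-- `u` is the least common ancestor in `T` of the labels in `Z`. -/
def IsLCA (T : LTree α) (Z : Finset α) (u : LTree α) : Prop :=
  IsSubtree u T ∧ Z ⊆ labels u ∧
    ∀ w, IsSubtree w T → Z ⊆ labels w → IsSubtree u w

theorem iso_refl (T : LTree α) : Iso T T := by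
  induction T with
  | leaf a => exact Iso.leaf a
  | node l r ihl ihr => exact Iso.node ihl ihr

theorem iso_symm {T T' : LTree α} (h : Iso T T') : Iso T' T := by
  induction h with
  | leaf a => exact Iso.leaf a
  | node h1 h2 ih1 ih2 => exact Iso.node ih1 ih2
  | swap h1 h2 ih1 ih2 => exact Iso.swap ih2 ih1

theorem iso_trans {T₁ T₂ T₃ : LTree α} (h1 : Iso T₁ T₂) (h2 : Iso T₂ T₃) :
    Iso T₁ T₃ := by
  induction h1 generalizing T₃ with
  | leaf a => exact h2
  | node ha hb iha ihb =>
    cases h2 with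
    | node hc hd => exact Iso.node (iha hc) (ihb hd)
    | swap hc hd => exact Iso.swap (iha hc) (ihb hd)
  | swap ha hb iha ihb =>
    cases h2 with
    | node hc hd => exact Iso.swap (iha hd) (ihb hc)
    | swap hc hd => exact Iso.node (iha hd) (ihb hc)

theorem optIso_refl (o : Option (LTree α)) : OptIso o o := by
  cases o with
  | none => trivial
  | some t => exact iso_refl t

theorem optIso_symm {o o' : Option (LTree α)} (h : OptIso o o') : OptIso o' o := by
  cases o <;> cases o' <;> simp_all [OptIso] <;> exact iso_symm h

theorem optIso_trans {o₁ o₂ o₃ : Option (LTree α)} (h1 : OptIso o₁ o₂)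
    (h2 : OptIso o₂ o₃) : OptIso o₁ o₃ := by
  cases o₁ <;> cases o₂ <;> cases o₃ <;> simp_all [OptIso]
  exact iso_trans h1 h2

theorem labels_nonempty (T : LTree α) : (labels T).Nonempty := by
  induction T with
  | leaf a => exact ⟨a, by simp [labels]⟩
  | node l r ihl ihr => exact ihl.mono (by simp [labels, Finset.subset_union_left])

theorem labelsO_restrict (T : LTree α) (S : Finset α) :
    labelsO (restrict T S) = labels T ∩ S := by
  induction T with
  | leaf a =>
    by_cases h : a ∈ S
    · simp [restrict, h, labelsO, labels, Finset.singleton_inter_of_mem h]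
    · simp [restrict, h, labelsO, labels, Finset.singleton_inter_of_notMem h]
  | node l r ihl ihr =>
    cases hl : restrict l S <;> cases hr : restrict r S <;>
      simp_all [restrict, labels, labelsO, Finset.union_inter_distrib_right] <;>
      simp [← ihl, ← ihr, labelsO]

theorem restrict_eq_none_iff {T : LTree α} {S : Finset α} :
    restrict T S = none ↔ labels T ∩ S = ∅ := by
  constructor
  · intro h
    have := labelsO_restrict T S
    rw [h] at this
    simpa [labelsO] using this.symm
  · intro h
    cases hr : restrict T S with
    | none => rfl
    | some t =>
      have := labelsO_restrict T S
      rw [hr, h] at this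
      exact absurd this (by simpa [labelsO] using (labels_nonempty t).ne_empty)

theorem restrict_of_subset {T : LTree α} {S : Finset α} (h : labels T ⊆ S) :
    restrict T S = some T := by
  induction T with
  | leaf a => simp [restrict, labels] at h ⊢; simp [h]
  | node l r ihl ihr =>
    simp [labels, Finset.union_subset_iff] at h
    simp [restrict, ihl h.1, ihr h.2]

theorem good_restrict {T : LTree α} (hT : Good T) (S : Finset α) :
    GoodO (restrict T S) := by
  induction T with
  | leaf a => by_cases h : a ∈ S <;> simp [restrict, h, GoodO, Good]
  | node l r ihl ihr =>
    obtain ⟨hgl, hgr, hd⟩ := hT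
    have ihl := ihl hgl
    have ihr := ihr hgr
    have h1 := labelsO_restrict l S
    have h2 := labelsO_restrict r S
    cases hl : restrict l S with
    | none => cases hr : restrict r S <;> simp_all [restrict, GoodO]
    | some l' =>
      cases hr : restrict r S with
      | none => simp_all [restrict, GoodO]
      | some r' =>
        rw [hl] at h1 ihl; rw [hr] at h2 ihr
        simp only [labelsO] at h1 h2
        simp only [GoodO] at ihl ihr
        simp only [restrict, hl, hr, GoodO, Good]
        refine ⟨ihl, ihr, Finset.disjoint_left.2 fun a ha har => ?_⟩
        have ha' : a ∈ labels l ∩ S := h1 ▸ ha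
        have har' : a ∈ labels r ∩ S := h2 ▸ har
        exact Finset.disjoint_left.1 hd (Finset.mem_inter.1 ha').1
          (Finset.mem_inter.1 har').1

theorem restrictO_restrict (T : LTree α) (S S' : Finset α) :
    restrictO (restrict T S) S' = restrict T (S ∩ S') := by
  induction T with
  | leaf a =>
    by_cases h : a ∈ S <;> by_cases h' : a ∈ S' <;>
      simp [restrict, restrictO, h, h']
  | node l r ihl ihr =>
    have hnl : restrict l S = none → restrict l (S ∩ S') = none := fun h =>
      restrict_eq_none_iff.2 (Finset.subset_empty.1
        (restrict_eq_none_iff.1 h ▸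
          Finset.inter_subset_inter_left Finset.inter_subset_left))
    have hnr : restrict r S = none → restrict r (S ∩ S') = none := fun h =>
      restrict_eq_none_iff.2 (Finset.subset_empty.1
        (restrict_eq_none_iff.1 h ▸
          Finset.inter_subset_inter_left Finset.inter_subset_left))
    cases hl : restrict l S <;> cases hr : restrict r S <;>
      simp_all [restrict, restrictO] <;>
      cases h1 : restrict l (S ∩ S') <;> cases h2 : restrict r (S ∩ S') <;>
      simp_all [restrictO, restrict]

theorem iso_labels {T T' : LTree α} (h : Iso T T') : labels T = labels T' := by
  induction h with
  | leaf a => rfl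
  | node h1 h2 ih1 ih2 => simp [labels, ih1, ih2]
  | swap h1 h2 ih1 ih2 => simp [labels, ih1, ih2, Finset.union_comm]

theorem iso_restrict {T T' : LTree α} (h : Iso T T') (S : Finset α) :
    OptIso (restrict T S) (restrict T' S) := by
  induction h with
  | leaf a => by_cases h : a ∈ S <;> simp [restrict, h, OptIso] <;> exact Iso.leaf a
  | node h1 h2 ih1 ih2 =>
    rename_i l₁ r₁ l₂ r₂
    cases e1 : restrict l₁ S <;> cases e2 : restrict r₁ S <;>
    cases e3 : restrict l₂ S <;> cases e4 : restrict r₂ S <;>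
      simp_all [restrict, OptIso] <;>
      first
        | exact Iso.node ih1 ih2
        | exact ih1
        | exact ih2
  | swap h1 h2 ih1 ih2 =>
    rename_i l₁ r₁ l₂ r₂
    cases e1 : restrict l₁ S <;> cases e2 : restrict r₁ S <;>
    cases e3 : restrict l₂ S <;> cases e4 : restrict r₂ S <;>
      simp_all [restrict, OptIso] <;>
      first
        | exact Iso.swap ih1 ih2
        | exact ih1
        | exact ih2

theorem optIso_restrictO {o o' : Option (LTree α)} (h : OptIso o o') (S : Finset α) :
    OptIso (restrictO o S) (restrictO o' S) := by
  cases o with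
  | none => cases o' <;> simp_all [OptIso, restrictO]
  | some t =>
    cases o' with
    | none => simp_all [OptIso]
    | some t' => exact iso_restrict h S

theorem restrictO_restrictO (o : Option (LTree α)) (S S' : Finset α) :
    restrictO (restrictO o S) S' = restrictO o (S ∩ S') := by
  cases o with
  | none => rfl
  | some t => exact restrictO_restrict t S S'

theorem labelsO_remove (T : LTree α) (X : Finset α) :
    labelsO (remove T X) = labels T \ X := by
  rw [remove, labelsO_restrict]
  exact Finset.inter_eq_right.2 Finset.sdiff_subset

theorem remove_eq_restrict {T : LTree α} {𝒳 X : Finset α} (hT : labels T = 𝒳) :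
    remove T X = restrict T (𝒳 \ X) := by rw [remove, hT]

theorem fin2_union {β : Type*} (g : Fin 2 → Set β) : (⋃ i, g i) = g 0 ∪ g 1 := by
  ext x; simp [Set.mem_iUnion, Fin.exists_fin_two]

theorem leafDis_of_iso {𝒳 X : Finset α} {T₁ T₂ : LTree α}
    (h₁ : IsTreeOn T₁ 𝒳) (h₂ : IsTreeOn T₂ 𝒳) (hX : X ⊆ 𝒳)
    (h : OptIso (remove T₁ X) (remove T₂ X)) :
    IsLeafDisagreement ![T₁, T₂] ![X, ∅] := by
  obtain ⟨hg₁, hl₁⟩ := h₁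
  obtain ⟨hg₂, hl₂⟩ := h₂
  have hrem₂ : remove T₂ (∅ : Finset α) = some T₂ := by
    rw [remove, Finset.sdiff_empty, restrict_of_subset (le_refl _)]
  refine ⟨some T₂, hg₂, ?_, ?_⟩
  · rw [fin2_union]
    simp only [Matrix.cons_val_zero, Matrix.cons_val_one, Matrix.head_cons, hrem₂]
    rw [labelsO_remove, hl₁]
    simp only [labelsO, hl₂]
    have : (↑(𝒳 \ X) : Set α) ⊆ ↑𝒳 := Finset.coe_subset.2 Finset.sdiff_subset
    rw [Set.union_eq_self_of_subset_left this]
  · intro i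
    match i with
    | 0 =>
      simp only [Matrix.cons_val_zero, restrictO]
      rw [labelsO_remove, hl₁, ← remove_eq_restrict hl₂]
      exact optIso_symm h
    | 1 =>
      simp only [Matrix.cons_val_one, Matrix.head_cons, Matrix.cons_val_zero, restrictO, hrem₂]
      simp only [labelsO]
      rw [hl₂, restrict_of_subset (le_of_eq hl₂)]
      exact iso_refl T₂

theorem iso_union_of_leafDis {𝒳 : Finset α} {T₁ T₂ : LTree α} {X : Fin 2 → Finset α}
    (h₁ : IsTreeOn T₁ 𝒳) (h₂ : IsTreeOn T₂ 𝒳)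
    (hld : IsLeafDisagreement ![T₁, T₂] X) :
    OptIso (remove T₁ (X 0 ∪ X 1)) (remove T₂ (X 0 ∪ X 1)) := by
  obtain ⟨hg₁, hl₁⟩ := h₁
  obtain ⟨hg₂, hl₂⟩ := h₂
  obtain ⟨TO, hgT, hlT, hiso⟩ := hld
  set X' : Finset α := X 0 ∪ X 1 with hX'
  have key : ∀ (T : LTree α) (i : Fin 2), labels T = 𝒳 → X i ⊆ X' →
      OptIso (restrictO TO (labelsO (remove T (X i)))) (remove T (X i)) →
      OptIso (restrictO TO (𝒳 \ X')) (remove T X') := by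
    intro T i hT hsub hi
    have hlabs : labelsO (remove T (X i)) = 𝒳 \ X i := by
      rw [labelsO_remove, hT]
    rw [hlabs] at hi
    have := optIso_restrictO hi (𝒳 \ X')
    rw [restrictO_restrictO] at this
    have hinter : (𝒳 \ X i) ∩ (𝒳 \ X') = 𝒳 \ X' := by
      ext a
      simp only [Finset.mem_inter, Finset.mem_sdiff]
      exact ⟨fun h => h.2, fun h => ⟨⟨h.1, fun hx => h.2 (hsub hx)⟩, h⟩⟩
    rw [hinter] at this
    have hr : restrictO (remove T (X i)) (𝒳 \ X') = remove T X' := by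
      rw [remove_eq_restrict hT, restrictO_restrict, hinter, ← remove_eq_restrict hT]
    rw [hr] at this
    exact this
  have k1 := key T₁ 0 hl₁ Finset.subset_union_left (by simpa using hiso 0)
  have k2 := key T₂ 1 hl₂ Finset.subset_union_right (by simpa using hiso 1)
  exact optIso_trans (optIso_symm k1) k2

theorem labelDis_of_iso {𝒳 X' : Finset α} {T₁ T₂ : LTree α}
    (h₁ : IsTreeOn T₁ 𝒳) (h₂ : IsTreeOn T₂ 𝒳)
    (h : OptIso (remove T₁ X') (remove T₂ X')) :
    IsLabelDisagreement ![T₁, T₂] X' := by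
  obtain ⟨hg₁, hl₁⟩ := h₁
  obtain ⟨hg₂, hl₂⟩ := h₂
  cases e1 : remove T₁ X' with
  | none =>
    have e2 : remove T₂ X' = none := by
      cases e2 : remove T₂ X' with
      | none => rfl
      | some t => rw [e1, e2] at h; exact absurd h (by simp [OptIso])
    refine ⟨none, trivial, ?_, ?_⟩
    · rw [fin2_union]
      simp [Matrix.cons_val_zero, Matrix.cons_val_one, Matrix.head_cons, e1, e2, labelsO]
    · intro i
      match i with
      | 0 => simp [e1, restrictO, OptIso]
      | 1 => simp [e2, restrictO, OptIso]
  | some T' =>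
    have hgood : Good T' := by
      have := good_restrict hg₁ (labels T₁ \ X')
      rw [← remove, e1] at this
      exact this
    have hlT' : labels T' = 𝒳 \ X' := by
      have := labelsO_remove T₁ X'
      rw [e1, hl₁] at this
      exact this
    have hl2 : labelsO (remove T₂ X') = 𝒳 \ X' := by rw [labelsO_remove, hl₂]
    refine ⟨some T', hgood, ?_, ?_⟩
    · rw [fin2_union]
      simp only [Matrix.cons_val_zero, Matrix.cons_val_one, Matrix.head_cons, e1, hl2]
      simp [labelsO, hlT']
    · intro i
      have hres : restrict T' (𝒳 \ X') = some T' :=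
        restrict_of_subset (le_of_eq hlT')
      match i with
      | 0 =>
        simp only [Matrix.cons_val_zero, restrictO, e1, labelsO, hlT', hres]
        exact iso_refl T'
      | 1 =>
        simp only [Matrix.cons_val_one, Matrix.head_cons, Matrix.cons_val_zero, restrictO, hl2, hres]
        rw [← e1]
        exact h

end LTree

open LTree

/-- Lemma 8 of the paper.  For two trees `T₁, T₂` on the same
label set `𝒳`, `MASTRL {T₁,T₂} = d_LR(T₁,T₂)`, and every minimum-size
leaf-disagreement `(X₁', X₂')` has disjoint parts and is obtained by partitioning
a label-disagreement `X' = X₁' ∪ X₂'` of size `d_LR(T₁,T₂)`. -/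
theorem mastrl_two_trees {α : Type u} [DecidableEq α]
    (𝒳 : Finset α) (T₁ T₂ : LTree α)
    (h₁ : IsTreeOn T₁ 𝒳) (h₂ : IsTreeOn T₂ 𝒳) :
    MASTRL ![T₁, T₂] = dLR T₁ T₂ ∧
    ∀ X : Fin 2 → Finset α, (∀ i, X i ⊆ 𝒳) →
      IsLeafDisagreement ![T₁, T₂] X →
      (X 0).card + (X 1).card = MASTRL ![T₁, T₂] →
      X 0 ∩ X 1 = ∅ ∧
      IsLabelDisagreement ![T₁, T₂] (X 0 ∪ X 1) ∧
      (X 0 ∪ X 1).card = dLR T₁ T₂ := by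
  have hUnion : labels T₁ ∪ labels T₂ = 𝒳 := by rw [h₁.2, h₂.2, Finset.union_self]
  -- the dLR set is nonempty and its infimum is attained
  have hrem : ∀ T : LTree α, labels T = 𝒳 → remove T 𝒳 = none := by
    intro T hT
    rw [remove, hT, Finset.sdiff_self]
    exact restrict_eq_none_iff.2 (Finset.inter_empty _)
  have hdmem : dLR T₁ T₂ ∈ {n | ∃ X : Finset α, X ⊆ labels T₁ ∪ labels T₂ ∧
      X.card = n ∧ OptIso (remove T₁ X) (remove T₂ X)} := by
    apply Nat.sInf_mem
    refine ⟨𝒳.card, 𝒳, le_of_eq hUnion.symm, rfl, ?_⟩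
    rw [hrem T₁ h₁.2, hrem T₂ h₂.2]
    trivial
  obtain ⟨Xd, hXd_sub, hXd_card, hXd_iso⟩ := hdmem
  have hXd_sub' : Xd ⊆ 𝒳 := hUnion ▸ hXd_sub
  -- the witness leaf-disagreement (Xd, ∅)
  have hwit : (∀ i, (![Xd, (∅ : Finset α)] i) ⊆ labels (![T₁, T₂] i)) ∧
      (∑ i, ((![Xd, (∅ : Finset α)]) i).card) = dLR T₁ T₂ ∧
      IsLeafDisagreement ![T₁, T₂] ![Xd, ∅] := by
    refine ⟨?_, ?_, leafDis_of_iso h₁ h₂ hXd_sub' hXd_iso⟩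
    · intro i
      match i with
      | 0 => simpa [h₁.2] using hXd_sub'
      | 1 => simp
    · simp [Fin.sum_univ_two, hXd_card]
  -- MASTRL ≤ dLR
  have hm_le : MASTRL ![T₁, T₂] ≤ dLR T₁ T₂ :=
    Nat.sInf_le ⟨![Xd, ∅], hwit.1, hwit.2.1, hwit.2.2⟩
  -- the MASTRL set is nonempty and its infimum is attained
  have hmmem : MASTRL ![T₁, T₂] ∈ {v | ∃ X : Fin 2 → Finset α,
      (∀ i, X i ⊆ labels (![T₁, T₂] i)) ∧ (∑ i, (X i).card) = v ∧
      IsLeafDisagreement ![T₁, T₂] X} := by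
    apply Nat.sInf_mem
    exact ⟨dLR T₁ T₂, ![Xd, ∅], hwit.1, hwit.2.1, hwit.2.2⟩
  obtain ⟨Xm, hXm_sub, hXm_sum, hXm_ld⟩ := hmmem
  -- dLR ≤ MASTRL
  have hsub_union : ∀ Y : Fin 2 → Finset α, (∀ i, Y i ⊆ 𝒳) →
      Y 0 ∪ Y 1 ⊆ labels T₁ ∪ labels T₂ := by
    intro Y hY
    rw [hUnion]
    exact Finset.union_subset (hY 0) (hY 1)
  have hXm_sub' : ∀ i, Xm i ⊆ 𝒳 := by
    intro i
    match i with
    | 0 => simpa [h₁.2] using hXm_sub 0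
    | 1 => simpa [h₂.2] using hXm_sub 1
  have hd_le : dLR T₁ T₂ ≤ MASTRL ![T₁, T₂] := by
    have hiso := iso_union_of_leafDis h₁ h₂ hXm_ld
    have := Nat.sInf_le (s := {n | ∃ X : Finset α, X ⊆ labels T₁ ∪ labels T₂ ∧
        X.card = n ∧ OptIso (remove T₁ X) (remove T₂ X)})
      ⟨Xm 0 ∪ Xm 1, hsub_union Xm hXm_sub', rfl, hiso⟩
    refine this.trans ?_
    rw [← hXm_sum, Fin.sum_univ_two]
    exact Finset.card_union_le _ _
  have heq : MASTRL ![T₁, T₂] = dLR T₁ T₂ := le_antisymm hm_le hd_le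
  refine ⟨heq, ?_⟩
  intro X hXsub hld hsum
  have hiso := iso_union_of_leafDis h₁ h₂ hld
  have hd_le' : dLR T₁ T₂ ≤ (X 0 ∪ X 1).card :=
    Nat.sInf_le ⟨X 0 ∪ X 1, hsub_union X hXsub, rfl, hiso⟩
  have hle : (X 0 ∪ X 1).card ≤ (X 0).card + (X 1).card := Finset.card_union_le _ _
  have hcard : (X 0 ∪ X 1).card = dLR T₁ T₂ := by
    refine le_antisymm ?_ hd_le'
    rw [← heq, ← hsum] at hd_le' ⊢
    exact hle
  have hinter := Finset.card_union_add_card_inter (X 0) (X 1)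
  have hi0 : (X 0 ∩ X 1).card = 0 := by
    rw [hcard, ← heq, ← hsum] at hinter
    omega
  exact ⟨Finset.card_eq_zero.1 hi0, labelDis_of_iso h₁ h₂ hiso, hcard⟩
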